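/- Let W = I_2(h) be the dihedral group of order 2h (h >= 3) with Coxeter element c. Then the noncrossing partitions of W are exactly the identity e, the h reflections, and c, so Pop_T(w) = e for every such w. Moreover, for each integer 1 <= i <= h-1, the least k >= 0 with Pop_T^k(c^{-i}) = e is exactly h - i. -/

import Mathlib

/-!
Common definitions: reflection length (absolute length) with respect to a set `R` of
"reflections" in a group, the absolute order, joins in the noncrossing partition lattice
`NC(W,c) = [1,c]`, the noncrossing projection `piT`, and the pop-tsack torsing operator `popT`.
-/

namespace PopTsack

variable {G : Type*} [Group G]

open scoped Classical

/-- The reflection length of `w` with respect to the set `R` of reflections: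
the least `r` such that `w` is a product of `r` elements of `R`. -/
noncomputable def absLength (R : Set G) (w : G) : ℕ :=
  sInf {r : ℕ | ∃ l : List G, l.length = r ∧ (∀ t ∈ l, t ∈ R) ∧ l.prod = w}

/-- The absolute order: `v ≤_T w` iff `ℓ_T v + ℓ_T (w v⁻¹) = ℓ_T w`. -/
def absLe (R : Set G) (v w : G) : Prop :=
  absLength R v + absLength R (w * v⁻¹) = absLength R w

/-- `p` is the join, in the noncrossing partition lattice `NC(G,c)` (the interval `[1,c]`
in absolute order), of the set `A ⊆ NC(G,c)`. -/
def IsNCJoin (R : Set G) (c : G) (A : Set G) (p : G) : Prop :=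
  absLe R p c ∧ (∀ a ∈ A, absLe R a p) ∧
    ∀ q : G, absLe R q c → (∀ a ∈ A, absLe R a q) → absLe R p q

/-- The noncrossing projection `π_T(w,c)`: the join in `NC(G,c)` of the set of reflections
lying weakly below `w` in absolute order.  (By Brady–Watt, `NC(G,c)` is a lattice when `G` is a
finite Coxeter group and `c` a Coxeter element, so this join exists; the value is defined by
choice and defaults to `1` in the degenerate case where no join exists.) -/
noncomputable def piT (R : Set G) (c w : G) : G :=
  if h : ∃ p : G, IsNCJoin R c {t | t ∈ R ∧ absLe R t w} p then h.choose else 1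

/-- The Coxeter pop-tsack torsing operator `Pop_T(w,c) = w ⬝ π_T(w,c)⁻¹`. -/
noncomputable def popT (R : Set G) (c w : G) : G := w * (piT R c w)⁻¹

end PopTsack

/-- The set of reflections of a Coxeter system: all conjugates of the simple reflections. -/
def CoxeterSystem.reflections {B W : Type*} [Group W] {M : CoxeterMatrix B}
    (cs : CoxeterSystem M W) : Set W :=
  {t | ∃ (w : W) (i : B), t = w * cs.simple i * w⁻¹}

/-- A (standard) Coxeter element: the product of all the simple reflections, each occurring
exactly once, in some order. -/
def CoxeterSystem.IsCoxeterElement {B W : Type*} [Group W] {M : CoxeterMatrix B}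
    (cs : CoxeterSystem M W) (c : W) : Prop :=
  ∃ l : List B, l.Nodup ∧ (∀ i : B, i ∈ l) ∧ c = (l.map cs.simple).prod

/-- A Coxeter matrix is irreducible if its Coxeter diagram is connected: the index set cannot be
split into two nonempty parts all of whose mutual entries are `2`. -/
def CoxeterMatrix.IsIrreducible {B : Type*} (M : CoxeterMatrix B) : Prop :=
  ∀ A : Set B, (∀ a ∈ A, ∀ b ∉ A, M a b = 2) → A = ∅ ∨ A = Set.univ

open PopTsack


open DihedralGroup

/-- Let `W = I₂(h)` be the dihedral group of order `2h` (`h ≥ 3`), presented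
by the Coxeter matrix `I₂ₘ (h-2)` (whose off-diagonal entry is `h`), with Coxeter element
`c = s * t`.  Then the noncrossing partitions of `W` (the elements `w` with `w ≤_T c`) are
exactly the identity, the `h` reflections, and `c`; consequently `Pop_T(w) = e` for every such
`w`.  Moreover, for each `1 ≤ i ≤ h-1`, the least `k ≥ 0` with `Pop_T^k(c^{-i}) = e` is exactly
`h - i`. -/
theorem popTsack_dihedral
    {W : Type*} [Group W] (h : ℕ) (hh : 3 ≤ h)
    (cs : CoxeterSystem (CoxeterMatrix.I (h - 2)) W)
    (c : W) (hc : c = cs.simple 0 * cs.simple 1) :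
    Set.ncard cs.reflections = h ∧
    (∀ w : W, absLe cs.reflections w c ↔ (w = 1 ∨ w ∈ cs.reflections ∨ w = c)) ∧
    (∀ w : W, absLe cs.reflections w c → popT cs.reflections c w = 1) ∧
    (∀ i : ℕ, 1 ≤ i → i ≤ h - 1 →
      (popT cs.reflections c)^[h - i] (c⁻¹ ^ i) = 1 ∧
      ∀ k : ℕ, k < h - i → (popT cs.reflections c)^[k] (c⁻¹ ^ i) ≠ 1) := by
  
  classical
  haveI : NeZero h := ⟨by omega⟩
  set s : W := cs.simple 0 with hsdef
  set t : W := cs.simple 1 with htdef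
  have hss : s * s = 1 := cs.simple_mul_simple_self 0
  have hsi : s⁻¹ = s := cs.inv_simple 0
  have hti : t⁻¹ = t := cs.inv_simple 1
  have hM : (CoxeterMatrix.I (h-2)) 0 1 = h := by
    simp [CoxeterMatrix.I]
    omega
  have hch : c ^ h = 1 := by
    have := cs.simple_mul_simple_pow 0 1
    rw [hM] at this
    rw [hc]; exact this
  have hts : t = c⁻¹ * s := by
    rw [hc, mul_inv_rev, hsi, hti, mul_assoc, hss, mul_one]
  have hconj : s * c * s⁻¹ = c⁻¹ := by
    rw [hc, hsi, mul_inv_rev, hsi, hti, ← mul_assoc, hss, one_mul]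
  have hscj : ∀ j : ℤ, s * c ^ j = c ^ (-j) * s := by
    intro j
    have h1 : (s * c * s⁻¹) ^ j = s * c ^ j * s⁻¹ := conj_zpow
    rw [hconj, inv_zpow'] at h1
    calc s * c ^ j = s * c ^ j * s⁻¹ * s := by rw [hsi, mul_assoc, hss, mul_one]
    _ = c ^ (-j) * s := by rw [← h1]
  -- multiplication table
  have m1 : ∀ j k : ℤ, c ^ j * c ^ k = c ^ (j + k) := fun j k => (zpow_add c j k).symm
  have m2 : ∀ j k : ℤ, c ^ j * (c ^ k * s) = c ^ (j + k) * s := by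
    intro j k; rw [← mul_assoc, m1]
  have m3 : ∀ j k : ℤ, (c ^ j * s) * c ^ k = c ^ (j - k) * s := by
    intro j k; rw [mul_assoc, hscj, ← mul_assoc, m1, sub_eq_add_neg]
  have m4 : ∀ j k : ℤ, (c ^ j * s) * (c ^ k * s) = c ^ (j - k) := by
    intro j k; rw [← mul_assoc, m3, mul_assoc, hss, mul_one]
  have m5 : ∀ j : ℤ, (c ^ j * s) * s = c ^ j := by
    intro j; rw [mul_assoc, hss, mul_one]
  have i2 : ∀ j : ℤ, (c ^ j * s)⁻¹ = c ^ j * s := by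
    intro j
    refine inv_eq_of_mul_eq_one_right ?_
    rw [m4, sub_self, zpow_zero]
  -- the homomorphism to the dihedral group
  have hsr_inv : ∀ i : ZMod h, (sr i : DihedralGroup h)⁻¹ = sr i :=
    fun i => inv_eq_of_mul_eq_one_right (sr_mul_self i)
  have key : ((sr 0 : DihedralGroup h) * sr 1) ^ h = 1 := by
    rw [sr_mul_sr]
    simpa using DihedralGroup.r_one_pow_n (n := h)
  have key' : ((sr 1 : DihedralGroup h) * sr 0) ^ h = 1 := by
    have h2 : ((sr 1 : DihedralGroup h) * sr 0) = ((sr 0 : DihedralGroup h) * sr 1)⁻¹ := by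
      rw [mul_inv_rev, hsr_inv, hsr_inv]
    rw [h2, inv_pow, key, inv_one]
  have hM10 : (CoxeterMatrix.I (h-2)) 1 0 = h := by
    simp [CoxeterMatrix.I]
    omega
  have hf : (CoxeterMatrix.I (h-2)).IsLiftable (![sr 0, sr 1] : Fin 2 → DihedralGroup h) := by
    intro i i'
    fin_cases i <;> fin_cases i' <;>
      simp only [Fin.zero_eta, Fin.mk_one, Fin.isValue, Matrix.cons_val_zero,
        Matrix.cons_val_one, Matrix.head_cons]
    · rw [(CoxeterMatrix.I (h-2)).diagonal, pow_one]
      simpa using sr_mul_self (0 : ZMod h)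
    · rw [hM]
      simpa using key
    · rw [hM10]
      simpa using key'
    · rw [(CoxeterMatrix.I (h-2)).diagonal, pow_one]
      simpa using sr_mul_self (1 : ZMod h)
  set φ : W →* DihedralGroup h := cs.lift ⟨![sr 0, sr 1], hf⟩ with hφdef
  have hφs : φ s = sr 0 := by
    rw [hsdef, hφdef]
    simpa using cs.lift_apply_simple hf 0
  have hφt : φ t = sr 1 := by
    rw [htdef, hφdef]
    simpa using cs.lift_apply_simple hf 1
  have hφc : φ c = r 1 := by
    rw [hc, map_mul, hφs, hφt, sr_mul_sr]
    norm_num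
  have hr_inv : ∀ i : ZMod h, (r i : DihedralGroup h)⁻¹ = r (-i) := by
    intro i
    refine inv_eq_of_mul_eq_one_right ?_
    rw [r_mul_r, add_neg_cancel, one_def]
  have hr_zpow : ∀ j : ℤ, (r 1 : DihedralGroup h) ^ j = r (j : ZMod h) := by
    intro j
    rcases j with n | n
    · rw [Int.ofNat_eq_coe, zpow_natCast, r_one_pow]
      push_cast
      rfl
    · rw [zpow_negSucc, r_one_pow, hr_inv]
      have : ((Int.negSucc n : ℤ) : ZMod h) = -((n : ZMod h) + 1) := by
        push_cast [Int.negSucc_eq]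
        ring
      rw [this]
      norm_num
  have hφcj : ∀ j : ℤ, φ (c ^ j) = r (j : ZMod h) := by
    intro j
    rw [map_zpow, hφc, hr_zpow]
  -- distinctness
  have hc1 : ∀ j : ℤ, c ^ j = 1 ↔ (h : ℤ) ∣ j := by
    intro j
    constructor
    · intro hj
      have := hφcj j
      rw [hj, map_one] at this
      have h0 : ((j : ZMod h)) = 0 := by
        have := this.symm
        rw [one_def] at this
        exact (r.injEq _ _).mp this
      exact_mod_cast (ZMod.intCast_zmod_eq_zero_iff_dvd j h).mp h0
    · rintro ⟨k, rfl⟩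
      rw [zpow_mul, zpow_natCast, hch, one_zpow]
  have hcne1 : c ≠ 1 := by
    intro hcc
    have h1 := (hc1 1).mp (by simpa using hcc)
    have h2 := Int.le_of_dvd one_pos h1
    omega
  have hrot_ne_refl : ∀ j k : ℤ, c ^ j ≠ c ^ k * s := by
    intro j k hjk
    have := congrArg φ hjk
    rw [hφcj, map_mul, hφcj, hφs, r_mul_sr] at this
    exact absurd this (by simp)
  -- classification
  have hclass : ∀ w : W, (∃ j : ℤ, w = c ^ j) ∨ (∃ j : ℤ, w = c ^ j * s) := by
    intro w
    induction w using cs.simple_induction_left with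
    | one => exact Or.inl ⟨0, by simp⟩
    | mul_simple_left w i ih =>
      have hstep : ∀ v : W, ((∃ j : ℤ, v = c ^ j) ∨ (∃ j : ℤ, v = c ^ j * s)) →
          ((∃ j : ℤ, s * v = c ^ j) ∨ (∃ j : ℤ, s * v = c ^ j * s)) := by
        rintro v (⟨j, rfl⟩ | ⟨j, rfl⟩)
        · exact Or.inr ⟨-j, by rw [hscj]⟩
        · refine Or.inl ⟨-j, ?_⟩
          rw [← mul_assoc, hscj, mul_assoc, hss, mul_one]
      fin_cases i
      · exact hstep w ih
      · show (∃ j : ℤ, t * w = c ^ j) ∨ (∃ j : ℤ, t * w = c ^ j * s)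
        rcases hstep w ih with ⟨j, hj⟩ | ⟨j, hj⟩
        · refine Or.inl ⟨-1 + j, ?_⟩
          rw [hts, mul_assoc, hj, ← zpow_neg_one, m1]
        · refine Or.inr ⟨-1 + j, ?_⟩
          rw [hts, mul_assoc, hj, ← zpow_neg_one, m2]
  -- reflections
  have hrefl : cs.reflections = {x : W | ∃ j : ℤ, x = c ^ j * s} := by
    ext x
    constructor
    · rintro ⟨w, i, rfl⟩
      rcases hclass w with ⟨j, rfl⟩ | ⟨j, rfl⟩ <;> fin_cases i
      · refine ⟨2 * j, ?_⟩
        show c ^ j * s * (c ^ j)⁻¹ = _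
        rw [← zpow_neg, m3]
        ring_nf
      · show c ^ j * t * (c ^ j)⁻¹ ∈ _
        refine ⟨2 * j - 1, ?_⟩
        rw [hts, ← zpow_neg_one, ← zpow_neg, ← mul_assoc, m1, m3]
        ring_nf
      · refine ⟨2 * j, ?_⟩
        show c ^ j * s * s * (c ^ j * s)⁻¹ = _
        rw [m5, i2, m2]
        ring_nf
      · show c ^ j * s * t * (c ^ j * s)⁻¹ ∈ _
        refine ⟨2 * j + 1, ?_⟩
        rw [hts, ← zpow_neg_one, m4, i2, m2]
        ring_nf
    · rintro ⟨j, rfl⟩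
      rcases Int.even_or_odd j with ⟨k, hk⟩ | ⟨k, hk⟩
      · refine ⟨c ^ k, 0, ?_⟩
        show c ^ j * s = c ^ k * s * (c ^ k)⁻¹
        rw [← zpow_neg, m3, hk]
        ring_nf
      · refine ⟨c ^ (k + 1), 1, ?_⟩
        show c ^ j * s = c ^ (k + 1) * t * (c ^ (k + 1))⁻¹
        rw [hts, ← zpow_neg_one, ← mul_assoc, m1, ← zpow_neg, m3, hk]
        ring_nf
  -- ncard of reflections
  have hs_mem : s ∈ cs.reflections := by
    rw [hrefl]; exact ⟨0, by rw [zpow_zero, one_mul]⟩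
  have hncard : Set.ncard cs.reflections = h := by
    have hR_eq : cs.reflections = (fun m : Fin h => c ^ (m : ℕ) * s) '' Set.univ := by
      rw [hrefl]
      ext x
      constructor
      · rintro ⟨j, rfl⟩
        have hj : c ^ j = c ^ (((j % (h : ℤ)).toNat : ℕ)) := by
          have h0 : (0:ℤ) < (h:ℤ) := by positivity
          have hmod : ((j % (h : ℤ)).toNat : ℤ) = j % (h : ℤ) :=
            Int.toNat_of_nonneg (Int.emod_nonneg j (by omega))
          rw [← zpow_natCast, hmod]
          have : c ^ (j - j % (h:ℤ)) = 1 := (hc1 _).mpr (Int.dvd_self_sub_of_emod_eq rfl)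
          calc c ^ j = c ^ (j % (h:ℤ)) * c ^ (j - j % (h:ℤ)) := by rw [m1]; ring_nf
          _ = c ^ (j % (h:ℤ)) := by rw [this, mul_one]
        have hlt : (j % (h : ℤ)).toNat < h := by
          have := Int.emod_lt_of_pos j (b := (h:ℤ)) (by omega)
          have := Int.emod_nonneg j (show (h:ℤ) ≠ 0 by omega)
          omega
        refine ⟨⟨(j % (h : ℤ)).toNat, hlt⟩, Set.mem_univ _, ?_⟩
        show c ^ (((j % (h : ℤ)).toNat : ℕ)) * s = c ^ j * s
        rw [← hj]
      · rintro ⟨m, -, rfl⟩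
        exact ⟨(m : ℕ), by rw [zpow_natCast]⟩
    rw [hR_eq, Set.ncard_image_of_injective _ ?_, Set.ncard_univ, Nat.card_eq_fintype_card,
      Fintype.card_fin]
    intro a b hab
    simp only [mul_left_inj] at hab
    have h1 : ((a:ℕ) : ZMod h) = ((b:ℕ) : ZMod h) := by
      have h2 := congrArg φ hab
      rw [← zpow_natCast, ← zpow_natCast, hφcj, hφcj] at h2
      have h3 := (r.injEq _ _).mp h2
      push_cast at h3
      exact h3
    have h4 := congrArg ZMod.val h1
    rw [ZMod.val_cast_of_lt a.isLt, ZMod.val_cast_of_lt b.isLt] at h4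
    exact Fin.ext h4
  -- absLength machinery
  set R := cs.reflections with hRdef
  set S : W → Set ℕ :=
    fun w => {n : ℕ | ∃ l : List W, l.length = n ∧ (∀ x ∈ l, x ∈ R) ∧ l.prod = w} with hSdef
  have haL : ∀ w : W, absLength R w = sInf (S w) := fun w => rfl
  have hs_memR : s ∈ R := hs_mem
  have hrefl_mem : ∀ j : ℤ, c ^ j * s ∈ R := by
    intro j; rw [hrefl]; exact ⟨j, rfl⟩
  have hSne : ∀ w : W, (S w).Nonempty := by
    intro w
    rcases hclass w with ⟨j, rfl⟩ | ⟨j, rfl⟩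
    · exact ⟨2, [c ^ j * s, s], rfl, by
        intro x hx
        simp only [List.mem_cons, List.mem_singleton] at hx
        rcases hx with rfl | rfl | hx
        · exact hrefl_mem j
        · exact hs_memR
        · exact absurd hx List.not_mem_nil, by
        simp only [List.prod_cons, List.prod_nil, mul_one]
        rw [m5]⟩
    · exact ⟨1, [c ^ j * s], rfl, by
        intro x hx
        simp only [List.mem_singleton] at hx
        rw [hx]
        exact hrefl_mem j, by simp⟩
  have haL_mem : ∀ w : W, absLength R w ∈ S w := fun w => Nat.sInf_mem (hSne w)
  have haL_one : absLength R 1 = 0 := by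
    rw [haL]
    exact Nat.sInf_eq_zero.mpr (Or.inl ⟨[], rfl, by simp, by simp⟩)
  have haL_eq_zero : ∀ w : W, absLength R w = 0 → w = 1 := by
    intro w hw
    have := haL_mem w
    rw [hw] at this
    obtain ⟨l, hl, -, hprod⟩ := this
    rw [List.length_eq_zero_iff] at hl
    rw [hl] at hprod
    simpa using hprod.symm
  have haL_eq_one : ∀ w : W, absLength R w = 1 → w ∈ R := by
    intro w hw
    have := haL_mem w
    rw [hw] at this
    obtain ⟨l, hl, hmem, hprod⟩ := this
    rw [List.length_eq_one_iff] at hl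
    obtain ⟨a, rfl⟩ := hl
    simp only [List.prod_singleton] at hprod
    rw [← hprod]
    exact hmem a (List.mem_singleton_self a)
  have hrefl_ne_one : ∀ x ∈ R, x ≠ 1 := by
    intro x hx
    rw [hrefl] at hx
    obtain ⟨j, rfl⟩ := hx
    intro hone
    exact hrot_ne_refl 0 j (by rw [zpow_zero, hone])
  have hrot_not_mem : ∀ j : ℤ, c ^ j ∉ R := by
    intro j hj
    rw [hrefl] at hj
    obtain ⟨k, hk⟩ := hj
    exact hrot_ne_refl j k hk
  have haL_refl : ∀ x ∈ R, absLength R x = 1 := by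
    intro x hx
    have hle : absLength R x ≤ 1 :=
      Nat.sInf_le ⟨[x], rfl, by simpa using hx, by simp⟩
    have hne : absLength R x ≠ 0 := fun h0 => hrefl_ne_one x hx (haL_eq_zero x h0)
    omega
  have haL_rot : ∀ j : ℤ, c ^ j ≠ 1 → absLength R (c ^ j) = 2 := by
    intro j hj
    have hle : absLength R (c ^ j) ≤ 2 := by
      refine Nat.sInf_le ⟨[c ^ j * s, s], rfl, ?_, ?_⟩
      · intro x hx
        simp only [List.mem_cons, List.mem_singleton] at hx
        rcases hx with rfl | rfl | hx
        · exact hrefl_mem j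
        · exact hs_memR
        · exact absurd hx List.not_mem_nil
      · simp only [List.prod_cons, List.prod_nil, mul_one]
        rw [m5]
    have hne0 : absLength R (c ^ j) ≠ 0 := fun h0 => hj (haL_eq_zero _ h0)
    have hne1 : absLength R (c ^ j) ≠ 1 := fun h1 => hrot_not_mem j (haL_eq_one _ h1)
    omega
  have haL_c : absLength R c = 2 := by
    have := haL_rot 1 (by rw [zpow_one]; exact hcne1)
    rwa [zpow_one] at this
  -- absLe facts
  have habsLe_one : ∀ q : W, absLe R 1 q := by
    intro q
    show absLength R 1 + absLength R (q * 1⁻¹) = absLength R q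
    rw [haL_one, inv_one, mul_one, zero_add]
  have habsLe_self : ∀ w : W, absLe R w w := by
    intro w
    show absLength R w + absLength R (w * w⁻¹) = absLength R w
    rw [mul_inv_cancel, haL_one, add_zero]
  have habsLe_refl_c : ∀ x ∈ R, absLe R x c := by
    intro x hx
    rw [hrefl] at hx
    obtain ⟨j, rfl⟩ := hx
    show absLength R (c ^ j * s) + absLength R (c * (c ^ j * s)⁻¹) = absLength R c
    have hcs : c * (c ^ j * s) = c ^ (1 + j) * s :=
      calc c * (c ^ j * s) = c ^ (1 : ℤ) * (c ^ j * s) := by rw [zpow_one]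
      _ = c ^ (1 + j) * s := m2 1 j
    rw [i2, hcs, haL_c, haL_refl _ (hrefl_mem j), haL_refl _ (hrefl_mem _)]
  have hchar : ∀ w : W, absLe R w c ↔ (w = 1 ∨ w ∈ R ∨ w = c) := by
    intro w
    constructor
    · intro hw
      have e : absLength R w + absLength R (c * w⁻¹) = absLength R c := hw
      rw [haL_c] at e
      have hcases : absLength R w = 0 ∨ absLength R w = 1 ∨
          (absLength R w = 2 ∧ absLength R (c * w⁻¹) = 0) := by omega
      rcases hcases with h0 | h1 | ⟨-, h2⟩
      · exact Or.inl (haL_eq_zero w h0)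
      · exact Or.inr (Or.inl (haL_eq_one w h1))
      · refine Or.inr (Or.inr ?_)
        have := haL_eq_zero _ h2
        rw [mul_inv_eq_one] at this
        exact this.symm
    · rintro (rfl | hwR | hwc)
      · exact habsLe_one c
      · exact habsLe_refl_c w hwR
      · rw [hwc]; exact habsLe_self c
  have hantisymm : ∀ a b : W, absLe R a b → absLe R b a → a = b := by
    intro a b h1 h2
    have e1 : absLength R a + absLength R (b * a⁻¹) = absLength R b := h1
    have e2 : absLength R b + absLength R (a * b⁻¹) = absLength R a := h2
    have h3 : absLength R (b * a⁻¹) = 0 := by omega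
    have := haL_eq_zero _ h3
    rw [mul_inv_eq_one] at this
    exact this.symm
  -- joins and pi_T
  have hjoin_unique : ∀ (A : Set W) (p p' : W),
      IsNCJoin R c A p → IsNCJoin R c A p' → p = p' := by
    intro A p p' hp hp'
    exact hantisymm p p' (hp.2.2 p' hp'.1 hp'.2.1) (hp'.2.2 p hp.1 hp.2.1)
  have hpiT : ∀ w p : W, IsNCJoin R c {x | x ∈ R ∧ absLe R x w} p → piT R c w = p := by
    intro w p hp
    have hex : ∃ q : W, IsNCJoin R c {x | x ∈ R ∧ absLe R x w} q := ⟨p, hp⟩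
    rw [PopTsack.piT, dif_pos hex]
    exact hjoin_unique _ _ _ hex.choose_spec hp
  have habsLe_refl_refl : ∀ a x : W, a ∈ R → absLe R a x → x ∈ R → a = x := by
    intro a x ha hax hx
    have e : absLength R a + absLength R (x * a⁻¹) = absLength R x := hax
    rw [haL_refl a ha, haL_refl x hx] at e
    have h0 : absLength R (x * a⁻¹) = 0 := by omega
    have := haL_eq_zero _ h0
    rw [mul_inv_eq_one] at this
    exact this.symm
  have hst_ne : s ≠ t := by
    intro he
    apply hcne1
    have h1 : (1 : W) * s = c⁻¹ * s := by rw [one_mul, ← hts, he]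
    have h2 := mul_right_cancel h1
    exact inv_eq_one.mp h2.symm
  have ht_memR : t ∈ R := by
    rw [hrefl]
    exact ⟨-1, by rw [hts, zpow_neg_one]⟩
  have hJ_full : ∀ A : Set W, A ⊆ R → s ∈ A → t ∈ A → IsNCJoin R c A c := by
    intro A hsub hsA htA
    refine ⟨habsLe_self c, fun a ha => habsLe_refl_c a (hsub ha), ?_⟩
    intro q hq hq2
    rcases (hchar q).mp hq with rfl | hqR | hqc
    · exfalso
      have e : absLength R s + absLength R (1 * s⁻¹) = absLength R 1 := hq2 s hsA
      rw [haL_one, haL_refl s hs_memR] at e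
      omega
    · exfalso
      have h1 := habsLe_refl_refl s q hs_memR (hq2 s hsA) hqR
      have h2 := habsLe_refl_refl t q ht_memR (hq2 t htA) hqR
      exact hst_ne (h1.trans h2.symm)
    · rw [hqc]; exact habsLe_self c
  have hJ_bot : IsNCJoin R c {x | x ∈ R ∧ absLe R x 1} 1 :=
    ⟨habsLe_one c, fun a ha => ha.2, fun q _ _ => habsLe_one q⟩
  have hJ_refl : ∀ x ∈ R, IsNCJoin R c {y | y ∈ R ∧ absLe R y x} x := by
    intro x hx
    exact ⟨habsLe_refl_c x hx, fun a ha => ha.2,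
      fun q _ hq2 => hq2 x ⟨hx, habsLe_self x⟩⟩
  -- pop computations
  have hpop_le : ∀ w : W, absLe R w c → popT R c w = 1 := by
    intro w hw
    rcases (hchar w).mp hw with rfl | hwR | hwc
    · rw [PopTsack.popT, hpiT 1 1 hJ_bot, inv_one, mul_one]
    · rw [PopTsack.popT, hpiT w w (hJ_refl w hwR), mul_inv_cancel]
    · rw [hwc, PopTsack.popT, hpiT c c (hJ_full _ (fun x hx => hx.1)
        ⟨hs_memR, habsLe_refl_c s hs_memR⟩ ⟨ht_memR, habsLe_refl_c t ht_memR⟩),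
        mul_inv_cancel]
  have habsLe_refl_rot : ∀ x ∈ R, ∀ j : ℤ, c ^ j ≠ 1 → absLe R x (c ^ j) := by
    intro x hx j hj
    rw [hrefl] at hx
    obtain ⟨k, rfl⟩ := hx
    show absLength R (c ^ k * s) + absLength R (c ^ j * (c ^ k * s)⁻¹) = absLength R (c ^ j)
    rw [i2, m2, haL_refl _ (hrefl_mem _), haL_refl _ (hrefl_mem _), haL_rot j hj]
  have hpop_rot : ∀ j : ℤ, c ^ j ≠ 1 → popT R c (c ^ j) = c ^ (j - 1) := by
    intro j hj
    have hJ : IsNCJoin R c {x | x ∈ R ∧ absLe R x (c ^ j)} c :=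
      hJ_full _ (fun x hx => hx.1) ⟨hs_memR, habsLe_refl_rot s hs_memR j hj⟩
        ⟨ht_memR, habsLe_refl_rot t ht_memR j hj⟩
    have hstep : c ^ j * c⁻¹ = c ^ (j - 1) := by
      rw [sub_eq_add_neg, ← m1, zpow_neg_one]
    rw [PopTsack.popT, hpiT _ c hJ, hstep]
  -- the iteration
  have hne_rot : ∀ m : ℕ, 0 < m → m < h → c ^ (-(m : ℤ)) ≠ 1 := by
    intro m hm0 hmh h1
    have hd := (hc1 _).mp h1
    rw [dvd_neg] at hd
    have := Int.le_of_dvd (by exact_mod_cast hm0) hd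
    omega
  have hiter : ∀ i : ℕ, 1 ≤ i → i ≤ h - 1 → ∀ k : ℕ, k ≤ h - i →
      (popT R c)^[k] (c ^ (-(i : ℤ))) = c ^ (-(((i + k : ℕ)) : ℤ)) := by
    intro i hi1 hi2 k
    induction k with
    | zero => intro _; simp
    | succ n ih =>
      intro hk
      rw [Function.iterate_succ_apply', ih (by omega)]
      have hne : c ^ (-(((i + n : ℕ)) : ℤ)) ≠ 1 := hne_rot (i + n) (by omega) (by omega)
      rw [hpop_rot _ hne]
      congr 1
      push_cast
      ring
  refine ⟨hncard, hchar, hpop_le, ?_⟩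
  intro i hi1 hi2
  have hpow : (c⁻¹ : W) ^ i = c ^ (-(i : ℤ)) := by
    rw [inv_pow, ← zpow_natCast, ← zpow_neg]
  constructor
  · rw [hpow, hiter i hi1 hi2 (h - i) le_rfl]
    have heq : i + (h - i) = h := by omega
    rw [heq]
    exact (hc1 _).mpr ⟨-1, by push_cast; ring⟩
  · intro k hk
    rw [hpow, hiter i hi1 hi2 k (by omega)]
    exact hne_rot (i + k) (by omega) (by omega)
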